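/- (Risky Bellman operator is a contraction) The operator B defined by (BG)(x,u) = c(x) + (1−c(x))·γ·max_{x'∈f̂(x,u)} min_{u'∈𝒰} G(x',u') is a γ-contraction with respect to the uniform norm on bounded functions G : 𝒵 → ℝ: ‖BG₁ − BG₂‖_∞ ≤ γ‖G₁ − G₂‖_∞. -/

import Mathlib

/-- The risky Bellman operator
`(BG)(x,u) = c(x) + (1 − c(x))·γ·max_{x'∈f̂(x,u)} min_{u'∈𝒰} G(x',u')`,
where `c(x) = 1` if `h(x) > 0` and `0` otherwise. -/
noncomputable def riskyBellman {X U : Type*} (fh : X × U → Set X) (h : X → ℝ)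
    (γ : ℝ) (G : X × U → ℝ) (p : X × U) : ℝ :=
  (if 0 < h p.1 then (1 : ℝ) else 0) +
    (1 - if 0 < h p.1 then (1 : ℝ) else 0) * γ *
      ⨆ x' : fh p, ⨅ u' : U, G (↑x', u')

lemma riskyBellman_aux {X U : Type*} [Fintype X] [Fintype U] [Nonempty U]
    (s : Set X) (hs : s.Nonempty) (F H : X × U → ℝ) (M : ℝ)
    (hM : ∀ q : X × U, F q - H q ≤ M) :
    (⨆ x' : s, ⨅ u' : U, F (↑x', u')) ≤ (⨆ x' : s, ⨅ u' : U, H (↑x', u')) + M := by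
  have : Nonempty s := hs.to_subtype
  apply ciSup_le
  intro x'
  have h1 : (⨅ u' : U, F (↑x', u')) ≤ (⨅ u' : U, H (↑x', u')) + M := by
    rw [← sub_le_iff_le_add]
    apply le_ciInf
    intro u'
    have h2 := ciInf_le (Finite.bddBelow_range (fun u' : U => F (↑x', u'))) u'
    linarith [hM (↑x', u')]
  refine h1.trans (add_le_add_left (le_ciSup (Finite.bddAbove_range
    (fun x' : s => ⨅ u' : U, H (↑x', u'))) x') M)

/-- the risky Bellman operator is a `γ`-contraction in the
uniform norm: `‖BG₁ − BG₂‖_∞ ≤ γ‖G₁ − G₂‖_∞`. -/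
theorem riskyBellman_contraction {X U : Type*} [Fintype X] [Fintype U]
    [Nonempty X] [Nonempty U]
    (fh : X × U → Set X) (hne : ∀ p, (fh p).Nonempty)
    (h : X → ℝ) (γ : ℝ) (hγ : γ ∈ Set.Ioo (0 : ℝ) 1)
    (G1 G2 : X × U → ℝ) :
    (⨆ p : X × U, |riskyBellman fh h γ G1 p - riskyBellman fh h γ G2 p|) ≤
      γ * ⨆ p : X × U, |G1 p - G2 p| := by
  obtain ⟨hγ0, hγ1⟩ := hγ
  set M := ⨆ p : X × U, |G1 p - G2 p| with hMdef
  have hbdd : BddAbove (Set.range fun p : X × U => |G1 p - G2 p|) :=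
    Finite.bddAbove_range _
  have hM0 : (0 : ℝ) ≤ M :=
    le_trans (abs_nonneg _) (le_ciSup hbdd (Classical.arbitrary _))
  have hub : ∀ q : X × U, |G1 q - G2 q| ≤ M := fun q => le_ciSup hbdd q
  apply ciSup_le
  intro p
  set A1 := ⨆ x' : fh p, ⨅ u' : U, G1 (↑x', u') with hA1
  set A2 := ⨆ x' : fh p, ⨅ u' : U, G2 (↑x', u') with hA2
  have h12 : A1 ≤ A2 + M :=
    riskyBellman_aux _ (hne p) G1 G2 M (fun q => (abs_le.mp (hub q)).2)
  have h21 : A2 ≤ A1 + M := by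
    apply riskyBellman_aux _ (hne p) G2 G1 M
    intro q
    have := (abs_le.mp (hub q)).1
    linarith
  by_cases hc : 0 < h p.1
  · simp only [riskyBellman, hc, if_true]
    have : (1:ℝ) + (1 - 1) * γ * A1 - ((1:ℝ) + (1 - 1) * γ * A2) = 0 := by ring
    rw [this, abs_zero]
    exact mul_nonneg hγ0.le hM0
  · simp only [riskyBellman, hc, if_false]
    have : (0:ℝ) + (1 - 0) * γ * A1 - ((0:ℝ) + (1 - 0) * γ * A2) = γ * (A1 - A2) := by ring
    rw [this, abs_mul, abs_of_pos hγ0]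
    have : |A1 - A2| ≤ M := abs_sub_le_iff.mpr ⟨by linarith, by linarith⟩
    exact mul_le_mul_of_nonneg_left this hγ0.le
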